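/- (Main duality theorem) Assume W is finite with longest element w₀. Then for every x ∈ W: b(C_x) · H_{w₀} = P_{x w₀}, where C_x is the Kazhdan–Lusztig basis element, b is the involution with b(v) = -v⁻¹ and b(H_y) = H_y, and P_{x w₀} is the dual (projective) basis element characterized by ⟨P_{x w₀}, C_y⟩ = δ_{x w₀, y}. -/

import Mathlib

open LaurentPolynomial

/-- Membership in `v ℤ[v] ⊆ ℤ[v,v⁻¹]`. -/
def IsVPol (p : LaurentPolynomial ℤ) : Prop :=
  ∃ q : Polynomial ℤ, p = Polynomial.toLaurent q * T 1

/-- The coefficient of `v` in a Laurent polynomial. -/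
def muCoeff (p : LaurentPolynomial ℤ) : ℤ := p.coeff 1

variable {B W : Type*} [Group W] {M : CoxeterMatrix B}

/-- The Bruhat order `≤` on `W`: generated by right multiplication by reflections which
increases the length. -/
def BruhatLE (cs : CoxeterSystem M W) : W → W → Prop :=
  Relation.ReflTransGen
    (fun a b => (∃ t, cs.IsReflection t ∧ b = a * t) ∧ cs.length a < cs.length b)

/-- The strict Bruhat order on `W`. -/
def BruhatLT (cs : CoxeterSystem M W) (x y : W) : Prop :=
  BruhatLE cs x y ∧ x ≠ y

/-- The Hecke algebra of a Coxeter system, axiomatized: a `ℤ[v,v⁻¹]`-algebra with a basis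
`T_x` indexed by `W` satisfying the braid and quadratic relations. -/
structure HeckeAlg (cs : CoxeterSystem M W) (A : Type*) [Ring A]
    [Algebra (LaurentPolynomial ℤ) A] where
  Tb : Module.Basis W (LaurentPolynomial ℤ) A
  Tb_one : Tb 1 = 1
  Tb_mul : ∀ x y : W, cs.length (x * y) = cs.length x + cs.length y →
    Tb x * Tb y = Tb (x * y)
  Tb_quadratic : ∀ i : B, (Tb (cs.simple i) + 1) *
    (Tb (cs.simple i) - algebraMap (LaurentPolynomial ℤ) A (T (-2))) = 0

namespace HeckeAlg

variable {cs : CoxeterSystem M W} {A : Type*} [Ring A] [Algebra (LaurentPolynomial ℤ) A]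

/-- The standard basis element `H_x = v^{ℓ(x)} T_x`. -/
noncomputable def H (ha : HeckeAlg cs A) (x : W) : A :=
  algebraMap (LaurentPolynomial ℤ) A (T (cs.length x : ℤ)) * ha.Tb x

/-- The element `C_s = H_s + v` for a simple reflection `s`. -/
noncomputable def Cs (ha : HeckeAlg cs A) (i : B) : A :=
  ha.H (cs.simple i) + algebraMap (LaurentPolynomial ℤ) A (T 1)

/-- Data of the bar involution `d` on the Hecke algebra: a ring endomorphism with
`d(v) = v⁻¹` and `d(H_x) = (H_{x⁻¹})⁻¹`. -/
structure Bar (ha : HeckeAlg cs A) where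
  d : A →+* A
  d_scalar : ∀ n : ℤ, d (algebraMap (LaurentPolynomial ℤ) A (T n)) =
    algebraMap (LaurentPolynomial ℤ) A (T (-n))
  d_H_mul : ∀ x : W, d (ha.H x) * ha.H x⁻¹ = 1
  d_H_mul' : ∀ x : W, ha.H x⁻¹ * d (ha.H x) = 1

/-- `c` is a Kazhdan–Lusztig basis element at `x`: bar-invariant and congruent to `H_x`
modulo `∑_y v ℤ[v] H_y`. -/
def IsKL (ha : HeckeAlg cs A) (bar : ha.Bar) (x : W) (c : A) : Prop :=
  bar.d c = c ∧ ∃ f : W →₀ LaurentPolynomial ℤ, (∀ y, IsVPol (f y)) ∧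
    c = ha.H x + f.sum fun y r => r • ha.H y

end HeckeAlg

section KLAuxiliary

open scoped Classical

namespace KLAux

local notation "R" => LaurentPolynomial ℤ


/-- coefficients vanish in degrees `≤ 0`. -/
def VP (p : LaurentPolynomial ℤ) : Prop := ∀ n : ℤ, n ≤ 0 → p.coeff n = 0

/-- coefficients vanish in degrees `≥ 0`. -/
def NV (p : LaurentPolynomial ℤ) : Prop := ∀ n : ℤ, 0 ≤ n → p.coeff n = 0

theorem toLaurent_apply_neg (q : Polynomial ℤ) (n : ℤ) (hn : n < 0) :
    (Polynomial.toLaurent q).coeff n = 0 := by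
  by_contra h
  have hs : n ∈ (Polynomial.toLaurent q).coeff.support := Finsupp.mem_support_iff.mpr h
  rw [LaurentPolynomial.support_coeff_toLaurent] at hs
  obtain ⟨m, _, hm⟩ := Finset.mem_map.mp hs
  rw [Nat.castEmbedding_apply] at hm
  omega

theorem IsVPol.vp {p : LaurentPolynomial ℤ} (h : IsVPol p) : VP p := by
  obtain ⟨q, rfl⟩ := h
  intro n hn
  have h2 := AddMonoidAlgebra.coeff_mul_single_apply (Polynomial.toLaurent q) (1 : ℤ) (1 : ℤ) n
  have h3 : T (1 : ℤ) = AddMonoidAlgebra.single (1 : ℤ) (1 : ℤ) := rfl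
  rw [h3, h2, mul_one]
  exact toLaurent_apply_neg q _ (by omega)

theorem VP.zero : VP 0 := fun n _ => rfl

theorem VP.add {p q : LaurentPolynomial ℤ} (hp : VP p) (hq : VP q) : VP (p + q) := by
  intro n hn
  rw [AddMonoidAlgebra.coeff_add, Finsupp.add_apply, hp n hn, hq n hn, add_zero]

theorem NV.zero : NV 0 := fun n _ => rfl

theorem NV.add {p q : LaurentPolynomial ℤ} (hp : NV p) (hq : NV q) : NV (p + q) := by
  intro n hn
  rw [AddMonoidAlgebra.coeff_add, Finsupp.add_apply, hp n hn, hq n hn, add_zero]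

theorem VP.mul {p q : LaurentPolynomial ℤ} (hp : VP p) (hq : VP q) : VP (p * q) := by
  intro n hn
  rw [AddMonoidAlgebra.coeff_mul]
  rw [Finsupp.sum]
  apply Finset.sum_eq_zero
  intro a ha
  rw [Finsupp.sum]
  apply Finset.sum_eq_zero
  intro b hb
  have ha' : ¬ (a ≤ 0) := fun h => (Finsupp.mem_support_iff.mp ha) (hp a h)
  have hb' : ¬ (b ≤ 0) := fun h => (Finsupp.mem_support_iff.mp hb) (hq b h)
  rw [if_neg (by omega)]

theorem NV.mul {p q : LaurentPolynomial ℤ} (hp : NV p) (hq : NV q) : NV (p * q) := by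
  intro n hn
  rw [AddMonoidAlgebra.coeff_mul]
  rw [Finsupp.sum]
  apply Finset.sum_eq_zero
  intro a ha
  rw [Finsupp.sum]
  apply Finset.sum_eq_zero
  intro b hb
  have ha' : ¬ (0 ≤ a) := fun h => (Finsupp.mem_support_iff.mp ha) (hp a h)
  have hb' : ¬ (0 ≤ b) := fun h => (Finsupp.mem_support_iff.mp hb) (hq b h)
  rw [if_neg (by omega)]

theorem VP.sum {ι : Type*} (s : Finset ι) (f : ι → LaurentPolynomial ℤ)
    (h : ∀ i ∈ s, VP (f i)) : VP (∑ i ∈ s, f i) := by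
  classical
  induction s using Finset.induction_on with
  | empty => simpa using VP.zero
  | insert _ _ hni ih =>
    rename_i a s
    rw [Finset.sum_insert hni]
    exact (h a (Finset.mem_insert_self a s)).add
      (ih (fun i hi => h i (Finset.mem_insert_of_mem hi)))

theorem NV.sum {ι : Type*} (s : Finset ι) (f : ι → LaurentPolynomial ℤ)
    (h : ∀ i ∈ s, NV (f i)) : NV (∑ i ∈ s, f i) := by
  classical
  induction s using Finset.induction_on with
  | empty => simpa using NV.zero
  | insert _ _ hni ih =>
    rename_i a s
    rw [Finset.sum_insert hni]
    exact (h a (Finset.mem_insert_self a s)).add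
      (ih (fun i hi => h i (Finset.mem_insert_of_mem hi)))

theorem vp_nv_eq_zero {p : LaurentPolynomial ℤ} (h1 : VP p) (h2 : NV p) : p = 0 := by
  apply LaurentPolynomial.ext
  intro n
  rcases le_or_gt n 0 with h | h
  · exact h1 n h
  · exact h2 n h.le




theorem LP_add_apply (p q : R) (m : ℤ) : (p + q).coeff m = p.coeff m + q.coeff m := rfl

theorem LP_single_apply (n : ℤ) (a : ℤ) (m : ℤ) :
    (AddMonoidAlgebra.single n a : R).coeff m = if n = m then a else 0 := by
  classical
  exact Finsupp.single_apply

section BRsec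

variable (bR : R →+* R)

variable (hbR : ∀ n : ℤ, bR (T n) = (if Even n then 1 else -1) * T (-n))

include hbR

theorem bR_apply (p : R) (m : ℤ) :
    (bR p).coeff m = (if Even m then 1 else -1 : ℤ) * p.coeff (-m) := by
  induction p using LaurentPolynomial.induction_on' with
  | add p q hp hq =>
    rw [map_add, LP_add_apply, LP_add_apply, hp, hq, mul_add]
  | C_mul_T n a =>
    rw [map_mul, hbR]
    have hCa : bR (C a) = C a := by
      rw [show (C a : R) = ((a : ℤ) : R) from eq_intCast C a, map_intCast]
    rw [hCa]
    have e1 : (C a : R) * ((if Even n then 1 else -1) * T (-n)) =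
        AddMonoidAlgebra.single (-n) (if Even n then a else -a) := by
      rcases em (Even n) with h | h
      · rw [if_pos h, if_pos h, one_mul, ← single_eq_C_mul_T]
      · rw [if_neg h, if_neg h]
        rw [show ((-1 : R) * T (-n)) = C (-1) * T (-n) by norm_num]
        rw [show (C a : R) * (C (-1) * T (-n)) = C (a * -1) * T (-n) by
          rw [map_mul]; ring]
        rw [← single_eq_C_mul_T]
        norm_num
    have e2 : (C a : R) * T n = AddMonoidAlgebra.single n a := (single_eq_C_mul_T a n).symm
    rw [e1, e2, LP_single_apply, LP_single_apply]
    rcases em (n = -m) with h | h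
    · rw [if_pos (by omega : -n = m), if_pos h]
      have hnm : Even n ↔ Even m := by subst h; exact even_neg
      rcases em (Even m) with hm | hm
      · rw [if_pos (hnm.mpr hm), if_pos hm]; ring
      · rw [if_neg (fun hh => hm (hnm.mp hh)), if_neg hm]; ring
    · rw [if_neg (by omega : ¬ -n = m), if_neg h, mul_zero]

theorem bR_bR (p : R) : bR (bR p) = p := by
  apply LaurentPolynomial.ext
  intro m
  rw [bR_apply bR hbR, bR_apply bR hbR, neg_neg]
  rcases em (Even m) with h | h
  · rw [if_pos h, if_pos (even_neg.mpr h)]; ring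
  · rw [if_neg h, if_neg (fun hh => h (even_neg.mp hh))]; ring

theorem invert_bR_comm (p : R) : invert (bR p) = bR (invert p) := by
  apply LaurentPolynomial.ext
  intro m
  rw [invert_apply, bR_apply bR hbR, bR_apply bR hbR, invert_apply, neg_neg]
  rcases em (Even m) with h | h
  · rw [if_pos (even_neg.mpr h), if_pos h]
  · rw [if_neg (fun hh => h (even_neg.mp hh)), if_neg h]

/-- the scalar twist `v ↦ -v`. -/
noncomputable def tw (p : R) : R := bR (invert p)

theorem tw_apply (p : R) (m : ℤ) :
    (tw bR p).coeff m = (if Even m then 1 else -1 : ℤ) * p.coeff m := by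
  rw [tw, bR_apply bR hbR, invert_apply, neg_neg]

omit hbR in
theorem tw_one : tw bR 1 = 1 := by rw [tw, map_one, map_one]

end BRsec

section VPtrans

variable (bR : LaurentPolynomial ℤ →+* LaurentPolynomial ℤ)
variable (hbR : ∀ n : ℤ, bR (T n) = (if Even n then 1 else -1) * T (-n))

include hbR

theorem VP.tw {p : LaurentPolynomial ℤ} (hp : VP p) : VP (tw bR p) := by
  intro n hn
  rw [tw_apply bR hbR, hp n hn, mul_zero]

theorem NV.tw {p : LaurentPolynomial ℤ} (hp : NV p) : NV (tw bR p) := by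
  intro n hn
  rw [tw_apply bR hbR, hp n hn, mul_zero]

theorem VP.bRmap {p : LaurentPolynomial ℤ} (hp : VP p) : NV (bR p) := by
  intro n hn
  rw [bR_apply bR hbR, hp (-n) (by omega), mul_zero]

theorem NV.bRmap {p : LaurentPolynomial ℤ} (hp : NV p) : VP (bR p) := by
  intro n hn
  rw [bR_apply bR hbR, hp (-n) (by omega), mul_zero]

end VPtrans

section DeltaSum

variable {W : Type*} [Fintype W]

open scoped Classical in
theorem delta_sum_vp (a b : W) (g f : W → LaurentPolynomial ℤ)
    (hg : ∀ z, VP (g z)) (hf : ∀ z, VP (f z)) :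
    VP ((∑ z : W, ((if z = a then 1 else 0) + g z) * ((if z = b then 1 else 0) + f z))
      - (if a = b then 1 else 0)) := by
  have hterm : ∀ z : W, ((if z = a then 1 else 0) + g z) * ((if z = b then 1 else 0) + f z)
      = (if z = a then 1 else 0) * (if z = b then 1 else 0) +
        ((if z = a then 1 else 0) * f z + g z * (if z = b then 1 else 0) + g z * f z) := by
    intro z; ring
  rw [Finset.sum_congr rfl (fun z _ => hterm z), Finset.sum_add_distrib]
  have h1 : (∑ z : W, (if z = a then 1 else 0) * (if z = b then 1 else 0) :
      LaurentPolynomial ℤ) = if a = b then 1 else 0 := by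
    simp [ite_mul, one_mul, zero_mul, Finset.sum_ite_eq']
    exact if_congr eq_comm rfl rfl
  rw [h1, add_sub_cancel_left]
  apply VP.sum
  intro z _
  apply VP.add
  apply VP.add
  · rcases em (z = a) with h | h
    · rw [if_pos h, one_mul]; exact hf z
    · rw [if_neg h, zero_mul]; exact VP.zero
  · rcases em (z = b) with h | h
    · rw [if_pos h, mul_one]; exact hg z
    · rw [if_neg h, mul_zero]; exact VP.zero
  · exact (hg z).mul (hf z)

open scoped Classical in
theorem delta_sum_nv (a b : W) (g f : W → LaurentPolynomial ℤ)
    (hg : ∀ z, NV (g z)) (hf : ∀ z, NV (f z)) :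
    NV ((∑ z : W, ((if z = a then 1 else 0) + g z) * ((if z = b then 1 else 0) + f z))
      - (if a = b then 1 else 0)) := by
  have hterm : ∀ z : W, ((if z = a then 1 else 0) + g z) * ((if z = b then 1 else 0) + f z)
      = (if z = a then 1 else 0) * (if z = b then 1 else 0) +
        ((if z = a then 1 else 0) * f z + g z * (if z = b then 1 else 0) + g z * f z) := by
    intro z; ring
  rw [Finset.sum_congr rfl (fun z _ => hterm z), Finset.sum_add_distrib]
  have h1 : (∑ z : W, (if z = a then 1 else 0) * (if z = b then 1 else 0) :
      LaurentPolynomial ℤ) = if a = b then 1 else 0 := by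
    simp [ite_mul, one_mul, zero_mul, Finset.sum_ite_eq']
    exact if_congr eq_comm rfl rfl
  rw [h1, add_sub_cancel_left]
  apply NV.sum
  intro z _
  apply NV.add
  apply NV.add
  · rcases em (z = a) with h | h
    · rw [if_pos h, one_mul]; exact hf z
    · rw [if_neg h, zero_mul]; exact NV.zero
  · rcases em (z = b) with h | h
    · rw [if_pos h, mul_one]; exact hg z
    · rw [if_neg h, mul_zero]; exact NV.zero
  · exact (hg z).mul (hf z)

end DeltaSum


def VP' := 0



theorem conj_eq_iff {W : Type*} [Group W] (g a t : W) :
    (g * t * g⁻¹ = a) ↔ (t = g⁻¹ * a * g) := by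
  constructor
  · intro h; rw [← h]; group
  · intro h; rw [h]; group

section Coxeter

variable {B W : Type*} [Group W] {M : CoxeterMatrix B} (cs : CoxeterSystem M W)

local prefix:100 "σ" => cs.simple
local notation "ℓ" => cs.length

/-- Tits' sign permutation attached to a simple reflection. -/
noncomputable def sigmaFun (i : B) : W × ZMod 2 → W × ZMod 2 :=
  fun p => (σ i * p.1 * σ i, p.2 + if p.1 = σ i then 1 else 0)

theorem simple_conj_eq_iff (i : B) (a t : W) :
    (σ i * t * σ i = a) ↔ (t = σ i * a * σ i) := by
  have h1 : σ i * t * σ i = σ i * t * (σ i)⁻¹ := by rw [cs.inv_simple]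
  rw [h1, conj_eq_iff, cs.inv_simple]

theorem sigmaFun_invol (i : B) : Function.Involutive (sigmaFun cs i) := by
  rintro ⟨t, e⟩
  simp only [sigmaFun]
  have h1 : σ i * (σ i * t * σ i) * σ i = t := by
    rw [show (σ i * (σ i * t * σ i) * σ i : W) = (σ i * σ i) * t * (σ i * σ i) by group,
      cs.simple_mul_simple_self, one_mul, mul_one]
  have h2 : (σ i * t * σ i = σ i) ↔ (t = σ i) := by
    rw [simple_conj_eq_iff]
    rw [show (σ i * σ i * σ i : W) = (σ i * σ i) * σ i by group, cs.simple_mul_simple_self,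
      one_mul]
  ext
  · exact h1
  · show e + (if t = σ i then 1 else 0) + (if σ i * t * σ i = σ i then 1 else 0) = e
    rcases em (t = σ i) with h | h
    · rw [if_pos h, if_pos (h2.mpr h)]
      have h3 : (1 : ZMod 2) + 1 = 0 := by decide
      rw [add_assoc, h3, add_zero]
    · rw [if_neg h, if_neg (fun hh => h (h2.mp hh)), add_zero, add_zero]

/-- Tits' sign permutation as a permutation. -/
noncomputable def sigmaPerm (i : B) : Equiv.Perm (W × ZMod 2) :=
  (sigmaFun_invol cs i).toPerm

theorem sigmaPerm_apply (i : B) (t : W) (e : ZMod 2) :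
    sigmaPerm cs i (t, e) = (σ i * t * σ i, e + if t = σ i then 1 else 0) := rfl

theorem sigmaPerm_mul_apply (i j : B) (t : W) (e : ZMod 2) :
    (sigmaPerm cs i * sigmaPerm cs j) (t, e) =
      ((σ i * σ j) * t * (σ i * σ j)⁻¹,
        e + ((if t = σ j then 1 else 0) + if t = σ j * σ i * σ j then 1 else 0)) := by
  show sigmaPerm cs i (sigmaPerm cs j (t, e)) = _
  rw [sigmaPerm_apply, sigmaPerm_apply]
  have h2 : (σ j * t * σ j = σ i) ↔ (t = σ j * σ i * σ j) := simple_conj_eq_iff cs j (σ i) t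
  ext
  · show σ i * (σ j * t * σ j) * σ i = _
    rw [mul_inv_rev, cs.inv_simple, cs.inv_simple]
    group
  · show e + _ + _ = _
    rcases em (σ j * t * σ j = σ i) with h | h
    · rw [if_pos h, if_pos (h2.mp h), add_assoc]
    · rw [if_neg h, if_neg (fun hh => h (h2.mpr hh)), add_assoc]

/-- the sequence of dihedral reflections. -/
noncomputable def rseq (i j : B) (n : ℕ) : W := ((σ i * σ j) ^ n)⁻¹ * σ j

theorem shift_pow (i j : B) (k : ℕ) :
    σ j * (σ i * σ j) ^ k = ((σ i * σ j) ^ k)⁻¹ * σ j := by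
  have hbase : σ j * (σ i * σ j) = (σ i * σ j)⁻¹ * σ j := by
    rw [mul_inv_rev, cs.inv_simple, cs.inv_simple]
    group
  set p := σ i * σ j with hp
  induction k with
  | zero => simp
  | succ k ih =>
    rw [pow_succ, ← mul_assoc, ih, mul_assoc, hbase]
    group

theorem rseq_even (i j : B) (k : ℕ) :
    ((σ i * σ j) ^ k)⁻¹ * σ j * (σ i * σ j) ^ k = rseq cs i j (2 * k) := by
  rw [mul_assoc, shift_pow, rseq, two_mul, pow_add, mul_inv_rev]
  set p := σ i * σ j with hp
  group

theorem rseq_odd (i j : B) (k : ℕ) :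
    ((σ i * σ j) ^ k)⁻¹ * (σ j * σ i * σ j) * (σ i * σ j) ^ k = rseq cs i j (2 * k + 1) := by
  have h1 : σ j * σ i * σ j = (σ i * σ j)⁻¹ * σ j := by
    rw [mul_inv_rev, cs.inv_simple, cs.inv_simple]
  rw [h1, rseq]
  set p := σ i * σ j with hp
  rw [show ((p ^ k)⁻¹ * (p⁻¹ * σ j) * p ^ k : W) =
    ((p ^ k)⁻¹ * p⁻¹) * (σ j * p ^ k) by group, shift_pow]
  rw [← hp]
  group

theorem sigmaPerm_mul_pow_apply (i j : B) (k : ℕ) (t : W) (e : ZMod 2) :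
    ((sigmaPerm cs i * sigmaPerm cs j) ^ k) (t, e) =
      ((σ i * σ j) ^ k * t * ((σ i * σ j) ^ k)⁻¹,
        e + ∑ n ∈ Finset.range (2 * k), (if t = rseq cs i j n then (1 : ZMod 2) else 0)) := by
  induction k with
  | zero => simp
  | succ k ih =>
    have hstep : ((sigmaPerm cs i * sigmaPerm cs j) ^ (k+1)) (t, e) =
        (sigmaPerm cs i * sigmaPerm cs j) (((sigmaPerm cs i * sigmaPerm cs j) ^ k) (t, e)) := by
      rw [pow_succ', Equiv.Perm.mul_apply]
    rw [hstep, ih, sigmaPerm_mul_apply]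
    have hA : ((σ i * σ j) ^ k * t * ((σ i * σ j) ^ k)⁻¹ = σ j) ↔ (t = rseq cs i j (2 * k)) := by
      rw [conj_eq_iff, rseq_even]
    have hB : ((σ i * σ j) ^ k * t * ((σ i * σ j) ^ k)⁻¹ = σ j * σ i * σ j) ↔
        (t = rseq cs i j (2 * k + 1)) := by
      rw [conj_eq_iff, rseq_odd]
    ext
    · show (σ i * σ j) * ((σ i * σ j) ^ k * t * ((σ i * σ j) ^ k)⁻¹) * (σ i * σ j)⁻¹ = _
      set p := σ i * σ j with hp
      group
    · show _ + _ = _ + _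
      rw [show 2 * (k + 1) = (2 * k) + 1 + 1 by omega]
      rw [Finset.sum_range_succ, Finset.sum_range_succ]
      rcases em ((σ i * σ j) ^ k * t * ((σ i * σ j) ^ k)⁻¹ = σ j) with h | h <;>
      rcases em ((σ i * σ j) ^ k * t * ((σ i * σ j) ^ k)⁻¹ = σ j * σ i * σ j) with h' | h'
      · rw [if_pos h, if_pos h', if_pos (hA.mp h), if_pos (hB.mp h')]; ring
      · rw [if_pos h, if_neg h', if_pos (hA.mp h), if_neg (fun hh => h' (hB.mpr hh))]; ring
      · rw [if_neg h, if_pos h', if_neg (fun hh => h (hA.mpr hh)), if_pos (hB.mp h')]; ring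
      · rw [if_neg h, if_neg h', if_neg (fun hh => h (hA.mpr hh)),
          if_neg (fun hh => h' (hB.mpr hh))]; ring

theorem sigmaPerm_liftable : M.IsLiftable (sigmaPerm cs) := by
  intro i j
  apply Equiv.ext
  rintro ⟨t, e⟩
  rw [sigmaPerm_mul_pow_apply]
  have hrel : (σ i * σ j) ^ (M i j) = 1 := cs.simple_mul_simple_pow i j
  have hper : ∀ n : ℕ, rseq cs i j (M i j + n) = rseq cs i j n := by
    intro n
    rw [rseq, rseq, add_comm, pow_add, hrel, mul_one]
  have hsum : ∑ n ∈ Finset.range (2 * M i j), (if t = rseq cs i j n then (1 : ZMod 2) else 0)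
      = 0 := by
    rw [two_mul, Finset.sum_range_add]
    have hc : (∑ n ∈ Finset.range (M i j),
        (if t = rseq cs i j (M i j + n) then (1 : ZMod 2) else 0)) =
        ∑ n ∈ Finset.range (M i j), (if t = rseq cs i j n then (1 : ZMod 2) else 0) :=
      Finset.sum_congr rfl (fun n _ => by rw [hper n])
    rw [hc, ← two_mul, show ((2 : ZMod 2)) = 0 by decide, zero_mul]
  rw [hsum, hrel]
  simp

/-- Tits' sign representation. -/
noncomputable def titsRep : W →* Equiv.Perm (W × ZMod 2) :=
  cs.lift ⟨sigmaPerm cs, sigmaPerm_liftable cs⟩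

theorem titsRep_simple (i : B) : titsRep cs (σ i) = sigmaPerm cs i :=
  cs.lift_apply_simple (sigmaPerm_liftable cs) i

/-- the sign cocycle. -/
noncomputable def eta (w t : W) : ZMod 2 := (titsRep cs w (t, 0)).2

theorem titsRep_apply (w t : W) (e : ZMod 2) :
    titsRep cs w (t, e) = (w * t * w⁻¹, e + eta cs w t) := by
  induction w using cs.simple_induction_left generalizing t e with
  | one =>
    have h1 : titsRep cs 1 = 1 := map_one _
    rw [eta, h1]
    simp
  | mul_simple_left w i ih =>
    have hm : ∀ f : ZMod 2, titsRep cs (σ i * w) (t, f) =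
        ((σ i * w) * t * (σ i * w)⁻¹, f + (eta cs w t + if w * t * w⁻¹ = σ i then 1 else 0)) := by
      intro f
      have hmul : titsRep cs (σ i * w) (t, f) = titsRep cs (σ i) (titsRep cs w (t, f)) := by
        rw [map_mul]; rfl
      rw [hmul, ih, titsRep_simple, sigmaPerm_apply]
      ext
      · show σ i * (w * t * w⁻¹) * σ i = _
        rw [mul_inv_rev, cs.inv_simple]
        group
      · show _ + _ + _ = _
        rw [add_assoc]
    rw [hm e]
    have he : eta cs (σ i * w) t = eta cs w t + if w * t * w⁻¹ = σ i then 1 else 0 := by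
      rw [eta, hm 0, zero_add]
    rw [he]

theorem eta_mul (u v t : W) : eta cs (u * v) t = eta cs v t + eta cs u (v * t * v⁻¹) := by
  have h1 : titsRep cs (u * v) (t, 0) = titsRep cs u (titsRep cs v (t, 0)) := by
    rw [map_mul]; rfl
  rw [eta, h1, titsRep_apply, titsRep_apply]
  simp

theorem eta_one (t : W) : eta cs 1 t = 0 := by
  rw [eta, map_one]
  rfl

theorem eta_simple (i : B) (t : W) : eta cs (σ i) t = if t = σ i then 1 else 0 := by
  rw [eta, titsRep_simple, sigmaPerm_apply, zero_add]

theorem eta_inv_conj (u r : W) : eta cs u⁻¹ (u * r * u⁻¹) = eta cs u r := by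
  have h0 := eta_mul cs u⁻¹ u r
  rw [inv_mul_cancel, eta_one] at h0
  have h1 : ∀ a b : ZMod 2, 0 = a + b → b = a := by decide
  exact h1 _ _ h0

end Coxeter




section Coxeter2

variable {B W : Type*} [Group W] {M : CoxeterMatrix B} (cs : CoxeterSystem M W)

local prefix:100 "σ" => cs.simple
local notation "ℓ" => cs.length
local notation "π" => cs.wordProd

theorem eta_eq_count (ω : List B) (t : W) :
    eta cs (π ω) t = ((cs.rightInvSeq ω).count t : ZMod 2) := by
  induction ω with
  | nil => simp [eta_one]
  | cons i ω ih =>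
    rw [cs.wordProd_cons, eta_mul, ih, eta_simple]
    have hris : cs.rightInvSeq (i :: ω) = ((π ω)⁻¹ * σ i * π ω) :: cs.rightInvSeq ω := rfl
    rw [hris, List.count_cons]
    simp only [beq_iff_eq]
    have hcond : (π ω * t * (π ω)⁻¹ = σ i) ↔ (t = (π ω)⁻¹ * σ i * π ω) := by
      rw [conj_eq_iff]
    push_cast
    rcases em (π ω * t * (π ω)⁻¹ = σ i) with h | h
    · rw [if_pos h, if_pos (hcond.mp h).symm]
    · rw [if_neg h, if_neg (fun hh => h (hcond.mpr hh.symm))]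

theorem isRightInversion_of_eta {w t : W} (h : eta cs w t = 1) : cs.IsRightInversion w t := by
  obtain ⟨ω, hred, rfl⟩ := cs.exists_reduced_word' w
  have hc := eta_eq_count cs ω t
  rw [h] at hc
  have hmem : t ∈ cs.rightInvSeq ω := by
    by_contra hmem
    rw [List.count_eq_zero.mpr hmem] at hc
    simp at hc
  exact cs.isRightInversion_of_mem_rightInvSeq hred hmem

theorem eta_refl_self {t : W} (ht : cs.IsReflection t) : eta cs t t = 1 := by
  obtain ⟨u, i, htu⟩ := ht
  have hconj : u⁻¹ * t * u = σ i := by rw [htu]; group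
  have e1 : eta cs t t = eta cs (σ i * u⁻¹) t + eta cs u ((σ i * u⁻¹) * t * (σ i * u⁻¹)⁻¹) := by
    have : t = u * (σ i * u⁻¹) := by rw [htu]; group
    nth_rewrite 1 [this]
    rw [eta_mul]
  have e2 : (σ i * u⁻¹) * t * (σ i * u⁻¹)⁻¹ = σ i := by
    rw [show ((σ i * u⁻¹) * t * (σ i * u⁻¹)⁻¹ : W) = σ i * (u⁻¹ * t * u) * (σ i)⁻¹ by group,
      hconj, cs.inv_simple, mul_assoc, cs.simple_mul_simple_self, mul_one]
  have e3 : eta cs (σ i * u⁻¹) t = eta cs u⁻¹ t + 1 := by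
    rw [eta_mul]
    have : u⁻¹ * t * u⁻¹⁻¹ = σ i := by rw [inv_inv]; exact hconj
    rw [this, eta_simple, if_pos rfl]
  have e4 : eta cs u⁻¹ t = eta cs u (σ i) := by
    have : t = u * σ i * u⁻¹ := htu
    rw [this, eta_inv_conj]
  rw [e1, e2, e3, e4]
  generalize eta cs u (σ i) = a
  have : ∀ a : ZMod 2, a + 1 + a = 1 := by decide
  exact this a

theorem eta_of_isRightInversion {w t : W} (h : cs.IsRightInversion w t) : eta cs w t = 1 := by
  have ht := h.1
  have htt : t * t = 1 := ht.mul_self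
  have hw : w = (w * t) * t := by rw [mul_assoc, htt, mul_one]
  have e1 : eta cs w t = eta cs t t + eta cs (w * t) (t * t * t⁻¹) := by
    nth_rewrite 1 [hw]; rw [eta_mul]
  have e2 : t * t * t⁻¹ = t := by rw [htt, one_mul, ht.inv]
  have e3 : eta cs (w * t) t = 0 := by
    have h01 : ∀ z : ZMod 2, z = 0 ∨ z = 1 := by decide
    rcases h01 (eta cs (w * t) t) with hz | hz
    · exact hz
    · exfalso
      have hinv := isRightInversion_of_eta cs hz
      have : ℓ (w * t * t) < ℓ (w * t) := hinv.2
      rw [mul_assoc, htt, mul_one] at this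
      have hlt := h.2
      omega
  rw [e1, e2, e3, eta_refl_self cs ht, add_zero]

variable [Fintype W]

/-- The set of right inversions. -/
noncomputable def invSet (w : W) : Finset W :=
  Finset.univ.filter (fun t => cs.IsRightInversion w t)

/-- The set of reflections. -/
noncomputable def reflSet : Finset W :=
  Finset.univ.filter (fun t => cs.IsReflection t)

theorem length_eq_card_invSet (w : W) : ℓ w = (invSet cs w).card := by
  obtain ⟨ω, hred, rfl⟩ := cs.exists_reduced_word' w
  have hset : invSet cs (π ω) = (cs.rightInvSeq ω).toFinset := by
    ext t
    simp only [invSet, Finset.mem_filter, Finset.mem_univ, true_and, List.mem_toFinset]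
    constructor
    · intro h
      have he := eta_of_isRightInversion cs h
      rw [eta_eq_count cs ω t] at he
      by_contra hmem
      rw [List.count_eq_zero.mpr hmem] at he
      simp at he
    · exact cs.isRightInversion_of_mem_rightInvSeq hred
  rw [hset, List.toFinset_card_of_nodup (hred.nodup_rightInvSeq), cs.length_rightInvSeq]
  exact hred

theorem invSet_subset_reflSet (w : W) : invSet cs w ⊆ reflSet cs := by
  intro t ht
  simp only [invSet, Finset.mem_filter, Finset.mem_univ, true_and] at ht
  simp only [reflSet, Finset.mem_filter, Finset.mem_univ, true_and]
  exact ht.1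

section W0

variable (w0 : W) (hw0 : ∀ x : W, cs.length x ≤ cs.length w0)

include hw0

theorem isRightInversion_w0 {t : W} (ht : cs.IsReflection t) : cs.IsRightInversion w0 t :=
  ⟨ht, (hw0 (w0 * t)).lt_of_ne (ht.length_mul_left_ne w0)⟩

theorem invSet_w0 : invSet cs w0 = reflSet cs := by
  apply Finset.Subset.antisymm (invSet_subset_reflSet cs w0)
  intro t ht
  simp only [reflSet, Finset.mem_filter, Finset.mem_univ, true_and] at ht
  simp only [invSet, Finset.mem_filter, Finset.mem_univ, true_and]
  exact isRightInversion_w0 cs w0 hw0 ht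

theorem key_length (x : W) : ℓ x + ℓ (x * w0) = ℓ w0 := by
  have h1 : invSet cs (x * w0) =
      (reflSet cs).filter (fun t => ¬ cs.IsRightInversion x (w0 * t * w0⁻¹)) := by
    ext t
    simp only [invSet, reflSet, Finset.mem_filter, Finset.mem_univ, true_and]
    have h01 : ∀ z : ZMod 2, z = 0 ∨ z = 1 := by decide
    constructor
    · intro h
      refine ⟨h.1, ?_⟩
      have he := eta_of_isRightInversion cs h
      rw [eta_mul] at he
      rw [eta_of_isRightInversion cs (isRightInversion_w0 cs w0 hw0 h.1)] at he
      intro hcon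
      rw [eta_of_isRightInversion cs hcon] at he
      simp at he
    · rintro ⟨ht, hncon⟩
      apply isRightInversion_of_eta cs
      rw [eta_mul, eta_of_isRightInversion cs (isRightInversion_w0 cs w0 hw0 ht)]
      rcases h01 (eta cs x (w0 * t * w0⁻¹)) with hz | hz
      · rw [hz]; decide
      · exact absurd (isRightInversion_of_eta cs hz) hncon
  have h2 : ((reflSet cs).filter (fun t => cs.IsRightInversion x (w0 * t * w0⁻¹))).card
      = (invSet cs x).card := by
    apply Finset.card_nbij' (i := fun t => w0 * t * w0⁻¹) (j := fun r => w0⁻¹ * r * w0)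
    · intro t ht
      simp only [Finset.mem_coe, Finset.mem_filter, Finset.mem_univ, true_and, reflSet, invSet] at ht ⊢
      exact ht.2
    · intro r hr
      simp only [Finset.mem_coe, Finset.mem_filter, Finset.mem_univ, true_and, reflSet, invSet] at hr ⊢
      constructor
      · have := (hr.1).conj w0⁻¹
        simpa using this
      · rw [show w0 * (w0⁻¹ * r * w0) * w0⁻¹ = r by group]
        exact hr
    · intro t _; group
    · intro r _; group
  have h3 : (invSet cs (x * w0)).card = (reflSet cs).card - (invSet cs x).card := by
    rw [h1, Finset.filter_not, Finset.card_sdiff_of_subset (Finset.filter_subset _ _), h2]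
  have h4 := length_eq_card_invSet cs (x * w0)
  have h5 := length_eq_card_invSet cs x
  have h6 : ℓ w0 = (reflSet cs).card := by
    rw [length_eq_card_invSet cs w0, invSet_w0 cs w0 hw0]
  have h7 : (invSet cs x).card ≤ (reflSet cs).card :=
    Finset.card_le_card (invSet_subset_reflSet cs x)
  omega

theorem w0_mul_w0 : w0 * w0 = 1 := by
  have := key_length cs w0 hw0 w0
  have h0 : ℓ (w0 * w0) = 0 := by omega
  exact cs.length_eq_zero_iff.mp h0

theorem w0_inv : w0⁻¹ = w0 :=
  inv_eq_of_mul_eq_one_right (w0_mul_w0 cs w0 hw0)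

end W0

theorem exists_simple_left {w : W} (hw : w ≠ 1) :
    ∃ (i : B) (w' : W), w = σ i * w' ∧ ℓ w = ℓ w' + 1 := by
  obtain ⟨i, hd⟩ := cs.exists_leftDescent_of_ne_one hw
  refine ⟨i, σ i * w, ?_, ?_⟩
  · rw [← mul_assoc, cs.simple_mul_simple_self, one_mul]
  · have h1 : ℓ (σ i * w) < ℓ w := hd
    have h2 := cs.length_simple_mul w i
    omega

theorem exists_simple_right {w : W} (hw : w ≠ 1) :
    ∃ (i : B) (w' : W), w = w' * σ i ∧ ℓ w = ℓ w' + 1 := by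
  obtain ⟨i, hd⟩ := cs.exists_rightDescent_of_ne_one hw
  refine ⟨i, w * σ i, ?_, ?_⟩
  · rw [mul_assoc, cs.simple_mul_simple_self, mul_one]
  · have h1 : ℓ (w * σ i) < ℓ w := hd
    have h2 := cs.length_mul_simple w i
    omega

end Coxeter2



section Hecke

variable {B W : Type*} [Group W] {M : CoxeterMatrix B} {cs : CoxeterSystem M W}
variable {A : Type*} [Ring A] [Algebra (LaurentPolynomial ℤ) A] (ha : HeckeAlg cs A)
variable [Fintype W]

local notation "alg" => algebraMap (LaurentPolynomial ℤ) A

theorem H_one : ha.H 1 = 1 := by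
  rw [HeckeAlg.H, ha.Tb_one, mul_one, cs.length_one]
  rw [show ((0 : ℕ) : ℤ) = 0 by rfl, T_zero, map_one]

theorem H_mul {x y : W} (h : cs.length (x * y) = cs.length x + cs.length y) :
    ha.H x * ha.H y = ha.H (x * y) := by
  rw [HeckeAlg.H, HeckeAlg.H, HeckeAlg.H]
  have h1 : ha.Tb x * (alg (T (cs.length y : ℤ)) * ha.Tb y) =
      alg (T (cs.length y : ℤ)) * (ha.Tb x * ha.Tb y) := by
    rw [← mul_assoc, ← Algebra.commutes (T (cs.length y : ℤ)) (ha.Tb x), mul_assoc]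
  rw [mul_assoc, h1, ← mul_assoc, ← map_mul, ← T_add, ha.Tb_mul x y h]
  congr 2
  push_cast [h]
  ring

theorem Hs_sq (i : B) : ha.H (cs.simple i) * ha.H (cs.simple i) =
    1 + algebraMap (LaurentPolynomial ℤ) A (T (-1) - T 1) * ha.H (cs.simple i) := by
  set Ts := ha.Tb (cs.simple i) with hTs
  have hc : Ts * alg (T (-2)) = alg (T (-2)) * Ts := (Algebra.commutes _ _).symm
  have e1 : (Ts + 1) * (Ts - alg (T (-2))) =
      Ts * Ts + Ts - (alg (T (-2)) * Ts + alg (T (-2))) := by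
    rw [mul_sub, add_mul, add_mul, one_mul, one_mul, hc]
  have e2 : Ts * Ts + Ts = alg (T (-2)) * Ts + alg (T (-2)) := by
    have h0 := ha.Tb_quadratic i
    rw [← hTs] at h0
    rw [e1] at h0
    exact sub_eq_zero.mp h0
  have e3 : Ts * Ts = alg (T (-2)) * Ts + alg (T (-2)) - Ts := eq_sub_of_add_eq e2
  have hlen : ((cs.length (cs.simple i) : ℤ)) = 1 := by rw [cs.length_simple]; rfl
  rw [HeckeAlg.H, ← hTs, hlen]
  have h1 : Ts * (alg (T 1) * Ts) = alg (T 1) * (Ts * Ts) := by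
    rw [← mul_assoc, ← Algebra.commutes (T (1 : ℤ)) Ts, mul_assoc]
  rw [mul_assoc, h1, e3]
  have Talg : ∀ (m n : ℤ) (x : A), alg (T m) * (alg (T n) * x) = alg (T (m + n)) * x := by
    intro m n x
    rw [← mul_assoc, ← map_mul, ← T_add]
  have Talg2 : ∀ m n : ℤ, alg (T m) * alg (T n) = alg (T (m + n)) := by
    intro m n
    rw [← map_mul, ← T_add]
  rw [Talg 1 1, show (1 : ℤ) + 1 = 2 from rfl]
  rw [mul_sub, mul_add, Talg 2 (-2), Talg2 2 (-2), show (2 : ℤ) + -2 = 0 from rfl,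
    T_zero, map_one, one_mul]
  have hr : alg (T (-1) - T 1) * (alg (T 1) * Ts) = Ts - alg (T 2) * Ts := by
    rw [map_sub, sub_mul, Talg (-1) 1, Talg 1 1, show (-1 : ℤ) + 1 = 0 from rfl,
      show (1 : ℤ) + 1 = 2 from rfl, T_zero, map_one, one_mul]
  rw [hr]
  abel

theorem H_mul_simple (x : W) (i : B) :
    ha.H x * ha.H (cs.simple i) = ha.H (x * cs.simple i) +
      (if cs.IsRightDescent x i then algebraMap (LaurentPolynomial ℤ) A (T (-1) - T 1) else 0)
        * ha.H x := by
  rcases em (cs.IsRightDescent x i) with hd | hd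
  · rw [if_pos hd]
    have hlen : cs.length (x * cs.simple i) + 1 = cs.length x := by
      have h1 : cs.length (x * cs.simple i) < cs.length x := hd
      have h2 := cs.length_mul_simple x i
      omega
    have hx : x = (x * cs.simple i) * cs.simple i := by
      rw [mul_assoc, cs.simple_mul_simple_self, mul_one]
    have hadd : cs.length ((x * cs.simple i) * cs.simple i) =
        cs.length (x * cs.simple i) + cs.length (cs.simple i) := by
      rw [← hx, cs.length_simple]
      omega
    have hH : ha.H x = ha.H (x * cs.simple i) * ha.H (cs.simple i) := by
      rw [H_mul ha hadd, ← hx]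
    rw [hH, mul_assoc, Hs_sq]
    rw [mul_add, mul_one, ← mul_assoc]
    have hcom : ha.H (x * cs.simple i) * alg (T (-1) - T 1) =
        alg (T (-1) - T 1) * ha.H (x * cs.simple i) := (Algebra.commutes _ _).symm
    rw [hcom, mul_assoc, ← hH]
  · rw [if_neg hd, zero_mul, add_zero]
    have h1 : ¬ cs.length (x * cs.simple i) < cs.length x := hd
    have h2 := cs.length_mul_simple x i
    have hadd : cs.length (x * cs.simple i) = cs.length x + cs.length (cs.simple i) := by
      rw [cs.length_simple]
      omega
    exact H_mul ha hadd

/-- The standard basis `H` as a `Basis`. -/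
noncomputable def Hb : Module.Basis W (LaurentPolynomial ℤ) A :=
  ha.Tb.unitsSMul (fun x => (@isUnit_T ℤ _ (cs.length x : ℤ)).unit)

theorem Hb_eq (x : W) : Hb ha x = ha.H x := by
  rw [Hb, Module.Basis.unitsSMul_apply, Units.smul_def, IsUnit.unit_spec,
    HeckeAlg.H, ← Algebra.smul_def]

/-- finite `R`-combination of the `H` basis. -/
noncomputable def combo (c : W → LaurentPolynomial ℤ) : A := ∑ z : W, c z • ha.H z

theorem expand_H (u : A) : u = combo ha (fun z => (Hb ha).repr u z) := by
  rw [combo]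
  conv_lhs => rw [← (Hb ha).sum_repr u]
  exact Finset.sum_congr rfl (fun x _ => by rw [Hb_eq])

section Bform
variable (Bf : A →ₗ[LaurentPolynomial ℤ] A →ₗ[LaurentPolynomial ℤ] LaurentPolynomial ℤ)
variable (hBf : ∀ x y : W, Bf (ha.H x) (ha.H y) = if x = y then 1 else 0)

include hBf

theorem Bf_H_combo (x : W) (e : W → LaurentPolynomial ℤ) :
    Bf (ha.H x) (combo ha e) = e x := by
  rw [combo, map_sum]
  simp only [map_smul, smul_eq_mul, hBf]
  simp [mul_ite, Finset.sum_ite_eq]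

theorem Bf_combo_H (c : W → LaurentPolynomial ℤ) (y : W) :
    Bf (combo ha c) (ha.H y) = c y := by
  rw [combo, map_sum, LinearMap.sum_apply]
  simp only [map_smul, LinearMap.smul_apply, smul_eq_mul, hBf]
  simp [mul_ite, Finset.sum_ite_eq']

theorem Bf_combo_combo (c e : W → LaurentPolynomial ℤ) :
    Bf (combo ha c) (combo ha e) = ∑ z : W, c z * e z := by
  nth_rewrite 1 [combo]
  rw [map_sum, LinearMap.sum_apply]
  apply Finset.sum_congr rfl
  intro z _
  rw [map_smul, LinearMap.smul_apply, smul_eq_mul, Bf_H_combo ha Bf hBf]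

theorem Bf_u_H (u : A) (z : W) : Bf u (ha.H z) = (Hb ha).repr u z := by
  nth_rewrite 1 [expand_H ha u]
  rw [Bf_combo_H ha Bf hBf]

theorem Bf_u_combo (u : A) (e : W → LaurentPolynomial ℤ) :
    Bf u (combo ha e) = ∑ z : W, (Hb ha).repr u z * e z := by
  nth_rewrite 1 [expand_H ha u]
  rw [Bf_combo_combo ha Bf hBf]

theorem adj_basis (i : B) (x y : W) :
    Bf (ha.H x * ha.H (cs.simple i)) (ha.H y) = Bf (ha.H x) (ha.H y * ha.H (cs.simple i)) := by
  rw [H_mul_simple ha x i, H_mul_simple ha y i, map_add, LinearMap.add_apply, map_add]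
  rw [hBf, hBf]
  have e1 : Bf ((if cs.IsRightDescent x i then algebraMap (LaurentPolynomial ℤ) A (T (-1) - T 1)
        else 0) * ha.H x) (ha.H y)
      = (if cs.IsRightDescent x i then (T (-1) - T 1 : LaurentPolynomial ℤ) else 0)
        * (if x = y then 1 else 0) := by
    rcases em (cs.IsRightDescent x i) with h | h
    · rw [if_pos h, if_pos h, ← Algebra.smul_def, map_smul, LinearMap.smul_apply, hBf,
        smul_eq_mul]
    · rw [if_neg h, if_neg h, zero_mul, map_zero, LinearMap.zero_apply, zero_mul]
  have e2 : Bf (ha.H x) ((if cs.IsRightDescent y i then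
        algebraMap (LaurentPolynomial ℤ) A (T (-1) - T 1) else 0) * ha.H y)
      = (if cs.IsRightDescent y i then (T (-1) - T 1 : LaurentPolynomial ℤ) else 0)
        * (if x = y then 1 else 0) := by
    rcases em (cs.IsRightDescent y i) with h | h
    · rw [if_pos h, if_pos h, ← Algebra.smul_def, map_smul, hBf, smul_eq_mul]
    · rw [if_neg h, if_neg h, zero_mul, map_zero, zero_mul]
  rw [e1, e2]
  have h3 : ((if x * cs.simple i = y then 1 else 0) : LaurentPolynomial ℤ)
      = (if x = y * cs.simple i then 1 else 0) := by
    have hδ : (x * cs.simple i = y) ↔ (x = y * cs.simple i) := by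
      constructor
      · intro h; rw [← h, mul_assoc, cs.simple_mul_simple_self, mul_one]
      · intro h; rw [h, mul_assoc, cs.simple_mul_simple_self, mul_one]
    exact if_congr hδ rfl rfl
  have h4 : ((if cs.IsRightDescent x i then (T (-1) - T 1 : LaurentPolynomial ℤ) else 0)
        * (if x = y then 1 else 0) : LaurentPolynomial ℤ)
      = (if cs.IsRightDescent y i then (T (-1) - T 1 : LaurentPolynomial ℤ) else 0)
        * (if x = y then 1 else 0) := by
    rcases em (x = y) with rfl | h
    · rfl
    · rw [if_neg h, mul_zero, mul_zero]
  rw [h3, h4]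

theorem adj_simple (i : B) (u u' : A) :
    Bf (u * ha.H (cs.simple i)) u' = Bf u (u' * ha.H (cs.simple i)) := by
  have hL : (Bf.comp (LinearMap.mulRight (LaurentPolynomial ℤ) (ha.H (cs.simple i)))) =
      Bf.compl₂ (LinearMap.mulRight (LaurentPolynomial ℤ) (ha.H (cs.simple i))) := by
    apply Module.Basis.ext (Hb ha)
    intro x
    apply Module.Basis.ext (Hb ha)
    intro y
    simp only [LinearMap.comp_apply, LinearMap.compl₂_apply, LinearMap.mulRight_apply, Hb_eq]
    exact adj_basis ha Bf hBf i x y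
  have h2 := DFunLike.congr_fun (DFunLike.congr_fun hL u) u'
  simpa only [LinearMap.comp_apply, LinearMap.compl₂_apply, LinearMap.mulRight_apply] using h2

theorem adj_word : ∀ (z : W) (u u' : A),
    Bf (u * ha.H z) u' = Bf u (u' * ha.H z⁻¹) := by
  suffices key : ∀ (n : ℕ) (z : W), cs.length z = n → ∀ u u' : A,
      Bf (u * ha.H z) u' = Bf u (u' * ha.H z⁻¹) by
    intro z; exact key (cs.length z) z rfl
  intro n
  induction n using Nat.strong_induction_on with
  | _ n ih =>
    intro z hzn u u'
    rcases em (z = 1) with rfl | hne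
    · rw [H_one, inv_one, H_one, mul_one, mul_one]
    · obtain ⟨i, z', hz, hl⟩ := exists_simple_right cs hne
      have hz' : cs.length (z' * cs.simple i) = cs.length z' + cs.length (cs.simple i) := by
        rw [← hz, cs.length_simple]
        omega
      have hHz : ha.H z = ha.H z' * ha.H (cs.simple i) := by
        rw [H_mul ha hz', ← hz]
      have hinv : cs.simple i * z'⁻¹ = z⁻¹ := by
        rw [hz, mul_inv_rev, cs.inv_simple]
      have hinvlen : cs.length (cs.simple i * z'⁻¹) =
          cs.length (cs.simple i) + cs.length z'⁻¹ := by
        rw [hinv, cs.length_inv, cs.length_simple, hz, cs.length_inv, hz', cs.length_simple]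
        omega
      rw [hHz, ← mul_assoc, adj_simple ha Bf hBf i, ih (cs.length z') (by omega) z' rfl,
        mul_assoc, H_mul ha hinvlen, hinv]

end Bform

theorem hom_H_mul (Φ : A →+* A)
    (hΦ : ∀ i : B, Φ (ha.H (cs.simple i)) * ha.H (cs.simple i) = 1) :
    ∀ x w : W, cs.length x + cs.length (x * w) = cs.length w →
      Φ (ha.H x) * ha.H w = ha.H (x * w) := by
  suffices key : ∀ (n : ℕ) (x w : W), cs.length x = n →
      cs.length x + cs.length (x * w) = cs.length w → Φ (ha.H x) * ha.H w = ha.H (x * w) by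
    intro x w h; exact key (cs.length x) x w rfl h
  intro n
  induction n using Nat.strong_induction_on with
  | _ n ih =>
    intro x w hxn hlen
    rcases em (x = 1) with rfl | hne
    · rw [H_one, map_one, one_mul, one_mul]
    · obtain ⟨i, x', hx, hl⟩ := exists_simple_left cs hne
      have hx' : x' = cs.simple i * x := by
        rw [hx, ← mul_assoc, cs.simple_mul_simple_self, one_mul]
      have hx'w : x' * w = cs.simple i * (x * w) := by
        rw [hx', mul_assoc]
      have hub : cs.length (x' * w) ≤ 1 + cs.length (x * w) := by
        have h1 := cs.length_mul_le (cs.simple i) (x * w)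
        rw [← hx'w, cs.length_simple] at h1
        exact h1
      have hlb : cs.length w ≤ cs.length x' + cs.length (x' * w) := by
        have h1 := cs.length_mul_le x'⁻¹ (x' * w)
        rw [show x'⁻¹ * (x' * w) = w by group, cs.length_inv] at h1
        exact h1
      have hl2 : cs.length x' + cs.length (x' * w) = cs.length w := by omega
      have hadd : cs.length (cs.simple i * (x * w)) =
          cs.length (cs.simple i) + cs.length (x * w) := by
        rw [← hx'w, cs.length_simple]
        omega
      have hHx : ha.H x = ha.H (cs.simple i) * ha.H x' := by
        have hll : cs.length (cs.simple i * x') = cs.length (cs.simple i) + cs.length x' := by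
          rw [← hx, cs.length_simple]
          omega
        rw [H_mul ha hll, ← hx]
      rw [hHx, map_mul, mul_assoc, ih (n - 1) (by omega) x' w (by omega) hl2,
        hx'w, ← H_mul ha hadd, ← mul_assoc, hΦ i, one_mul]



end Hecke


section BarLemmas

variable {B W : Type*} [Group W] {M : CoxeterMatrix B} {cs : CoxeterSystem M W}
variable {A : Type*} [Ring A] [Algebra (LaurentPolynomial ℤ) A] (ha : HeckeAlg cs A)

local notation "alg" => algebraMap (LaurentPolynomial ℤ) A

theorem d_alg (bar : ha.Bar) (p : LaurentPolynomial ℤ) :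
    bar.d (alg p) = alg (invert p) := by
  induction p using LaurentPolynomial.induction_on' with
  | add p q hp hq => rw [map_add, map_add, hp, hq, map_add, map_add]
  | C_mul_T n a =>
    have h1 : (C a : LaurentPolynomial ℤ) = ((a : ℤ) : LaurentPolynomial ℤ) := eq_intCast C a
    have h2 : invert (C a * T n) = C a * T (-n) := by
      rw [map_mul, invert_T, invert_C]
    have h3 : bar.d (alg (C a)) = alg (C a) := by
      rw [h1, map_intCast, map_intCast]
    rw [h2, map_mul, map_mul, map_mul, h3, bar.d_scalar n]

variable [Fintype W]

theorem bA_combo (bA : A →+* A) (bR : LaurentPolynomial ℤ →+* LaurentPolynomial ℤ)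
    (hbA : ∀ p : LaurentPolynomial ℤ, bA (alg p) = alg (bR p))
    (hbAH : ∀ y : W, bA (ha.H y) = ha.H y) (c : W → LaurentPolynomial ℤ) :
    bA (combo ha c) = combo ha (fun z => bR (c z)) := by
  rw [combo, combo, map_sum]
  apply Finset.sum_congr rfl
  intro z _
  rw [Algebra.smul_def, map_mul, hbA, hbAH, ← Algebra.smul_def]

theorem bA_invol (bA : A →+* A) (bR : LaurentPolynomial ℤ →+* LaurentPolynomial ℤ)
    (hbR : ∀ n : ℤ, bR (T n) = (if Even n then 1 else -1) * T (-n))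
    (hbA : ∀ p : LaurentPolynomial ℤ, bA (alg p) = alg (bR p))
    (hbAH : ∀ y : W, bA (ha.H y) = ha.H y) (u : A) :
    bA (bA u) = u := by
  have h1 := expand_H ha u
  rw [h1, bA_combo ha bA bR hbA hbAH, bA_combo ha bA bR hbA hbAH]
  have h2 : (fun z => bR (bR ((Hb ha).repr u z))) = fun z => (Hb ha).repr u z :=
    funext fun z => bR_bR bR hbR _
  rw [h2]

theorem Phi_phi_Hs (bar : ha.Bar) (bA : A →+* A)
    (hbAH : ∀ y : W, bA (ha.H y) = ha.H y) (i : B) :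
    bA (bar.d (ha.H (cs.simple i))) * ha.H (cs.simple i) = 1 := by
  have h := bar.d_H_mul (cs.simple i)
  rw [cs.inv_simple] at h
  have h2 := congrArg bA h
  rw [map_mul, hbAH, map_one] at h2
  exact h2

theorem Phi_psi_Hs (bar : ha.Bar) (bA : A →+* A)
    (hbAH : ∀ y : W, bA (ha.H y) = ha.H y) (i : B) :
    bar.d (bA (ha.H (cs.simple i))) * ha.H (cs.simple i) = 1 := by
  rw [hbAH]
  have h := bar.d_H_mul (cs.simple i)
  rwa [cs.inv_simple] at h

theorem Phi_phi_scal (bar : ha.Bar) (bA : A →+* A)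
    (bR : LaurentPolynomial ℤ →+* LaurentPolynomial ℤ)
    (hbA : ∀ p : LaurentPolynomial ℤ, bA (alg p) = alg (bR p))
    (p : LaurentPolynomial ℤ) :
    bA (bar.d (alg p)) = alg (tw bR p) := by
  rw [d_alg ha bar, hbA]
  rfl

theorem Phi_psi_scal (bar : ha.Bar) (bA : A →+* A)
    (bR : LaurentPolynomial ℤ →+* LaurentPolynomial ℤ)
    (hbR : ∀ n : ℤ, bR (T n) = (if Even n then 1 else -1) * T (-n))
    (hbA : ∀ p : LaurentPolynomial ℤ, bA (alg p) = alg (bR p))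
    (p : LaurentPolynomial ℤ) :
    bar.d (bA (alg p)) = alg (tw bR p) := by
  rw [hbA, d_alg ha bar, invert_bR_comm bR hbR]
  rfl

theorem combo_of_KL (y : W) (u : A) (f : W →₀ LaurentPolynomial ℤ)
    (hf : u = ha.H y + f.sum fun z r => r • ha.H z) :
    u = combo ha (fun z => (if z = y then 1 else 0) + f z) := by
  rw [hf, combo]
  have h1 : (f.sum fun z r => r • ha.H z) = ∑ z : W, f z • ha.H z :=
    Finsupp.sum_fintype _ _ (fun z => zero_smul _ _)
  rw [h1]
  rw [Finset.sum_congr rfl (fun z (_ : z ∈ Finset.univ) =>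
    (add_smul (if z = y then 1 else 0) (f z) (ha.H z)))]
  rw [Finset.sum_add_distrib]
  have h2 : (∑ z : W, (if z = y then (1 : LaurentPolynomial ℤ) else 0) • ha.H z) = ha.H y := by
    simp [ite_smul, Finset.sum_ite_eq']
  rw [h2]

theorem hom_combo_mul (w0 : W) (hw0 : ∀ x : W, cs.length x ≤ cs.length w0)
    (bR : LaurentPolynomial ℤ →+* LaurentPolynomial ℤ)
    (Φ : A →+* A)
    (hs : ∀ i : B, Φ (ha.H (cs.simple i)) * ha.H (cs.simple i) = 1)
    (hscal : ∀ p : LaurentPolynomial ℤ, Φ (alg p) = alg (tw bR p))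
    (c : W → LaurentPolynomial ℤ) :
    Φ (combo ha c) * ha.H w0 = combo ha (fun z => tw bR (c (z * w0))) := by
  rw [combo, map_sum, Finset.sum_mul]
  have hterm : ∀ z : W, Φ (c z • ha.H z) * ha.H w0 = tw bR (c z) • ha.H (z * w0) := by
    intro z
    rw [Algebra.smul_def, map_mul, hscal, mul_assoc,
      hom_H_mul ha Φ hs z w0 (key_length cs w0 hw0 z), ← Algebra.smul_def]
  rw [Finset.sum_congr rfl (fun z (_ : z ∈ Finset.univ) => hterm z), combo]
  apply Fintype.sum_equiv (Equiv.mulRight w0)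
  intro z
  have hz : z * w0 * w0 = z := by
    rw [mul_assoc, w0_mul_w0 cs w0 hw0, mul_one]
  show tw bR (c z) • ha.H (z * w0) = tw bR (c (z * w0 * w0)) • ha.H (z * w0)
  rw [hz]

end BarLemmas

end KLAux

end KLAuxiliary


open scoped Classical
open HeckeAlg
open Matrix

/-- main duality theorem: `b(C_x) · H_{w₀} = P_{x w₀}`, where `b` is the
ring involution with `b(v) = -v⁻¹` and `b(H_y) = H_y`. -/
theorem stmt19 {B W : Type*} [Group W] [Fintype W] {M : CoxeterMatrix B}
    (cs : CoxeterSystem M W)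
    (A : Type*) [Ring A] [Algebra (LaurentPolynomial ℤ) A] (ha : HeckeAlg cs A)
    (bar : ha.Bar) (w0 : W) (hw0 : ∀ x : W, cs.length x ≤ cs.length w0)
    (Bf : A →ₗ[LaurentPolynomial ℤ] A →ₗ[LaurentPolynomial ℤ] LaurentPolynomial ℤ)
    (hBf : ∀ x y : W, Bf (ha.H x) (ha.H y) = if x = y then 1 else 0)
    (C : W → A) (hC : ∀ z, ha.IsKL bar z (C z))
    (P : W → A) (hP : ∀ x y : W, Bf (P x) (C y) = if x = y then 1 else 0)
    (bR : LaurentPolynomial ℤ →+* LaurentPolynomial ℤ)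
    (hbR : ∀ n : ℤ, bR (T n) = (if Even n then 1 else -1) * T (-n))
    (bA : A →+* A)
    (hbA : ∀ p : LaurentPolynomial ℤ,
      bA (algebraMap (LaurentPolynomial ℤ) A p) = algebraMap (LaurentPolynomial ℤ) A (bR p))
    (hbAH : ∀ y : W, bA (ha.H y) = ha.H y)
    (x : W) :
    bA (C x) * ha.H w0 = P (x * w0) := by
  classical
  obtain ⟨hdx, fx, hfx, hCex⟩ := hC x
  have hCx : C x = KLAux.combo ha (fun z => (if z = x then 1 else 0) + fx z) :=
    KLAux.combo_of_KL ha x (C x) fx hCex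
  have hww : w0 * w0 = 1 := KLAux.w0_mul_w0 cs w0 hw0
  have hwinv : w0⁻¹ = w0 := KLAux.w0_inv cs w0 hw0
  have hiff : ∀ z a : W, (z * w0 = a) ↔ (z = a * w0) := by
    intro z a
    constructor
    · intro h; rw [← h, mul_assoc, hww, mul_one]
    · intro h; rw [h, mul_assoc, hww, mul_one]
  have htw_add : ∀ a b : LaurentPolynomial ℤ,
      KLAux.tw bR (a + b) = KLAux.tw bR a + KLAux.tw bR b := by
    intro a b
    simp only [KLAux.tw, map_add]
  have htw_zero : KLAux.tw bR 0 = 0 := by simp only [KLAux.tw, map_zero]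
  have hsφ : ∀ i : B, (bA.comp bar.d) (ha.H (cs.simple i)) * ha.H (cs.simple i) = 1 :=
    fun i => KLAux.Phi_phi_Hs ha bar bA hbAH i
  have hscφ : ∀ p : LaurentPolynomial ℤ, (bA.comp bar.d) (algebraMap (LaurentPolynomial ℤ) A p)
      = algebraMap (LaurentPolynomial ℤ) A (KLAux.tw bR p) :=
    fun p => KLAux.Phi_phi_scal ha bar bA bR hbA p
  have hsψ : ∀ i : B, (bar.d.comp bA) (ha.H (cs.simple i)) * ha.H (cs.simple i) = 1 :=
    fun i => KLAux.Phi_psi_Hs ha bar bA hbAH i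
  have hscψ : ∀ p : LaurentPolynomial ℤ, (bar.d.comp bA) (algebraMap (LaurentPolynomial ℤ) A p)
      = algebraMap (LaurentPolynomial ℤ) A (KLAux.tw bR p) :=
    fun p => KLAux.Phi_psi_scal ha bar bA bR hbR hbA p
  have hQ : bA (C x) * ha.H w0
      = KLAux.combo ha (fun z => (if z = x * w0 then 1 else 0) + KLAux.tw bR (fx (z * w0))) := by
    have h1 : bA (C x) =
        (bA.comp bar.d) (KLAux.combo ha (fun z => (if z = x then 1 else 0) + fx z)) := by
      rw [RingHom.comp_apply, ← hCx, hdx]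
    rw [h1, KLAux.hom_combo_mul ha w0 hw0 bR (bA.comp bar.d) hsφ hscφ]
    congr 1
    funext z
    rcases em (z * w0 = x) with h | h
    · rw [if_pos h, if_pos ((hiff z x).mp h), htw_add, KLAux.tw_one bR]
    · rw [if_neg h, if_neg (fun hh => h ((hiff z x).mpr hh)), zero_add, zero_add]
  have hGoal : ∀ y : W,
      Bf (bA (C x) * ha.H w0) (C y) = if x * w0 = y then 1 else 0 := by
    intro y
    obtain ⟨hdy, fy, hfy, hCey⟩ := hC y
    have hCy : C y = KLAux.combo ha (fun z => (if z = y then 1 else 0) + fy z) :=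
      KLAux.combo_of_KL ha y (C y) fy hCey
    have hVP : KLAux.VP (Bf (bA (C x) * ha.H w0) (C y) - (if x * w0 = y then 1 else 0)) := by
      rw [hQ, hCy, KLAux.Bf_combo_combo ha Bf hBf]
      exact KLAux.delta_sum_vp (x * w0) y _ _
        (fun z => KLAux.VP.tw bR hbR (KLAux.IsVPol.vp (hfx (z * w0))))
        (fun z => KLAux.IsVPol.vp (hfy z))
    have hbACx : bA (C x) =
        KLAux.combo ha (fun z => (if z = x then 1 else 0) + bR (fx z)) := by
      rw [hCx, KLAux.bA_combo ha bA bR hbA hbAH]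
      congr 1
      funext z
      rcases em (z = x) with h | h
      · rw [if_pos h, map_add, _root_.map_one]
      · rw [if_neg h, zero_add, zero_add]
    have hCyH : C y * ha.H w0 = KLAux.combo ha
        (fun z => (if z = y * w0 then 1 else 0) + KLAux.tw bR (bR (fy (z * w0)))) := by
      have h2 : bA (C y) =
          KLAux.combo ha (fun z => bR ((if z = y then 1 else 0) + fy z)) := by
        rw [hCy, KLAux.bA_combo ha bA bR hbA hbAH]
      have h1 : C y = (bar.d.comp bA)
          (KLAux.combo ha (fun z => bR ((if z = y then 1 else 0) + fy z))) := by
        rw [RingHom.comp_apply, ← h2, KLAux.bA_invol ha bA bR hbR hbA hbAH, hdy]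
      rw [h1, KLAux.hom_combo_mul ha w0 hw0 bR (bar.d.comp bA) hsψ hscψ]
      congr 1
      funext z
      rcases em (z * w0 = y) with h | h
      · rw [if_pos h, if_pos ((hiff z y).mp h), map_add, _root_.map_one, htw_add, KLAux.tw_one bR]
      · rw [if_neg h, if_neg (fun hh => h ((hiff z y).mpr hh)), zero_add, zero_add]
    have hNV : KLAux.NV (Bf (bA (C x) * ha.H w0) (C y) - (if x * w0 = y then 1 else 0)) := by
      have hadj : Bf (bA (C x) * ha.H w0) (C y) = Bf (bA (C x)) (C y * ha.H w0) := by
        rw [KLAux.adj_word ha Bf hBf w0 (bA (C x)) (C y), hwinv]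
      rw [hadj, hbACx, hCyH, KLAux.Bf_combo_combo ha Bf hBf]
      have hδ : ((if x * w0 = y then 1 else 0) : LaurentPolynomial ℤ)
          = (if x = y * w0 then 1 else 0) := if_congr (hiff x y) rfl rfl
      rw [hδ]
      exact KLAux.delta_sum_nv x (y * w0) _ _
        (fun z => KLAux.VP.bRmap bR hbR (KLAux.IsVPol.vp (hfx z)))
        (fun z => KLAux.NV.tw bR hbR (KLAux.VP.bRmap bR hbR (KLAux.IsVPol.vp (hfy (z * w0)))))
    have h0 := KLAux.vp_nv_eq_zero hVP hNV
    exact sub_eq_zero.mp h0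
  have hPy : ∀ y : W, Bf (bA (C x) * ha.H w0 - P (x * w0)) (C y) = 0 := by
    intro y
    rw [map_sub, LinearMap.sub_apply, hGoal y, hP (x * w0) y, sub_self]
  have hrepr0 : ∀ z : W, (KLAux.Hb ha).repr (bA (C x) * ha.H w0 - P (x * w0)) z = 0 := by
    set u0 := bA (C x) * ha.H w0 - P (x * w0) with hu0
    set Mp : Matrix W W (LaurentPolynomial ℤ) :=
      Matrix.of (fun z y => (KLAux.Hb ha).repr (C y) z) with hMp
    set Mq : Matrix W W (LaurentPolynomial ℤ) :=
      Matrix.of (fun z x' => (KLAux.Hb ha).repr (P x') z) with hMq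
    have hMI : Mqᵀ * Mp = 1 := by
      apply Matrix.ext
      intro x' y
      rw [Matrix.mul_apply, Matrix.one_apply]
      have h1 := hP x' y
      rw [KLAux.expand_H ha (P x'), KLAux.expand_H ha (C y),
        KLAux.Bf_combo_combo ha Bf hBf] at h1
      rw [← h1]
      apply Finset.sum_congr rfl
      intro z _
      rw [Matrix.transpose_apply, hMq, hMp, Matrix.of_apply, Matrix.of_apply]
    have hMI2 : Mp * Mqᵀ = 1 := mul_eq_one_comm.mp hMI
    have hQMp : Mq * Mpᵀ = 1 := by
      have h2 := congrArg Matrix.transpose hMI2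
      rwa [Matrix.transpose_mul, Matrix.transpose_transpose, Matrix.transpose_one] at h2
    have hvec : Mpᵀ *ᵥ (fun z => (KLAux.Hb ha).repr u0 z) = 0 := by
      funext y
      have h1 := hPy y
      rw [KLAux.expand_H ha (C y), KLAux.Bf_u_combo ha Bf hBf] at h1
      show ∑ z : W, Mpᵀ y z * (KLAux.Hb ha).repr u0 z = 0
      rw [← h1]
      apply Finset.sum_congr rfl
      intro z _
      rw [Matrix.transpose_apply, hMp, Matrix.of_apply, mul_comm]
    have hzero : (fun z => (KLAux.Hb ha).repr u0 z) = 0 := by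
      have h2 : Mq *ᵥ (Mpᵀ *ᵥ (fun z => (KLAux.Hb ha).repr u0 z)) = 0 := by
        rw [hvec, Matrix.mulVec_zero]
      rwa [Matrix.mulVec_mulVec, hQMp, Matrix.one_mulVec] at h2
    intro z
    exact congrFun hzero z
  have hu00 : bA (C x) * ha.H w0 - P (x * w0) = 0 := by
    have h3 : (KLAux.Hb ha).repr (bA (C x) * ha.H w0 - P (x * w0)) = 0 :=
      Finsupp.ext hrepr0
    have h4 := congrArg ((KLAux.Hb ha).repr.symm) h3
    rwa [LinearEquiv.symm_apply_apply, map_zero] at h4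
  exact sub_eq_zero.mp hu00
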